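/- For a finite plane tree τ coded by Lukasiewicz path e (with vertices u₀ < ⋯ < u_{p−1} in lexicographic order), the generation |u_i| of the i-th visited vertex equals #{ j < i : e_j ≤ min_{j < l ≤ i} e_l } , i.e. the number of times before i at which the path achieves a 'weak future minimum' on (j, i]. Equivalently |u_i| = #{ j ∈ {0,…,i−1} : e_j = min_{j ≤ l ≤ i} e_l and e_j ≤ e_l for all j ≤ l ≤ i }. -/

import Mathlib

open scoped Classical

/-- Number of children `k_u(τ)` of the word `u` in the finite set of words `τ`. -/
noncomputable def numChildren (τ : Finset (List ℕ)) (u : List ℕ) : ℕ :=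
  (τ.filter (fun v => v ≠ [] ∧ v.dropLast = u)).card

/-- A finite plane tree. -/
def IsPlaneTree (τ : Finset (List ℕ)) : Prop :=
  [] ∈ τ ∧
  (∀ u ∈ τ, u ≠ [] → u.dropLast ∈ τ) ∧
  (∀ u ∈ τ, ∀ j : ℕ, (u ++ [j]) ∈ τ ↔ 1 ≤ j ∧ j ≤ numChildren τ u)

/-- The vertices of `τ` listed in (lexicographic) increasing order. -/
noncomputable def sortedVertices (τ : Finset (List ℕ)) : List (List ℕ) :=
  τ.sort (· ≤ ·)

/-- The Lukasiewicz path of `τ`. -/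
noncomputable def lukasPath (τ : Finset (List ℕ)) (i : ℕ) : ℤ :=
  ∑ j ∈ Finset.range i, ((numChildren τ ((sortedVertices τ).getD j []) : ℤ) - 1)

/-! ### auxiliary lemmas -/


lemma lex_append_lt (u : List ℕ) {t : List ℕ} (ht : t ≠ []) : u < u ++ t := by
  induction u with
  | nil =>
    cases t with
    | nil => exact absurd rfl ht
    | cons c r => exact List.Lex.nil
  | cons a u ih => exact List.Lex.cons ih

lemma lex_prefix_le {u v : List ℕ} (h : u <+: v) : u ≤ v := by
  obtain ⟨t, rfl⟩ := h
  rcases eq_or_ne t [] with rfl | ht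
  · simp
  · exact le_of_lt (lex_append_lt u ht)

lemma lex_diverge_lt {b c : ℕ} (h : b < c) (w s r : List ℕ) :
    w ++ b :: s < w ++ c :: r := by
  induction w with
  | nil => exact List.Lex.rel h
  | cons a w ih => exact List.Lex.cons ih

lemma lex_lt_elim {u v : List ℕ} (h : u < v) :
    u <+: v ∨ ∃ w b c s r, u = w ++ b :: s ∧ v = w ++ c :: r ∧ b < c := by
  have h' : List.Lex (· < ·) u v := h
  clear h
  induction h' with
  | nil => exact Or.inl (List.nil_prefix)
  | @cons a l₁ l₂ h ih =>
    rcases ih with hp | ⟨w, b, c, s, r, rfl, rfl, hbc⟩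
    · obtain ⟨t, rfl⟩ := hp
      exact Or.inl ⟨t, rfl⟩
    · exact Or.inr ⟨a :: w, b, c, s, r, rfl, rfl, hbc⟩
  | @rel a l₁ b l₂ h =>
    exact Or.inr ⟨[], a, b, l₁, l₂, rfl, rfl, h⟩

lemma lex_sandwich {u x v : List ℕ} (hux : u ≤ x) (hxv : x ≤ v) (huv : u <+: v) :
    u <+: x := by
  rcases eq_or_lt_of_le hux with rfl | h
  · exact List.prefix_rfl
  rcases lex_lt_elim h with hp | ⟨w, b, c, s, r, rfl, rfl, hbc⟩
  · exact hp
  · exfalso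
    obtain ⟨t, hv⟩ := huv
    rw [List.append_assoc, List.cons_append] at hv
    have hlt : v < w ++ c :: r := hv ▸ lex_diverge_lt hbc w (s ++ t) r
    exact absurd hxv (not_le.mpr hlt)

/-! ### prefix/getD helpers -/

lemma prefix_take_eq {u v : List ℕ} (h : u <+: v) {m : ℕ} (hm : m ≤ u.length) :
    v.take m = u.take m := by
  obtain ⟨t, rfl⟩ := h
  exact List.take_append_of_le_length hm

lemma prefix_getD_eq {u v : List ℕ} (h : u <+: v) {m : ℕ} (hm : m < u.length) :
    v.getD m 0 = u.getD m 0 := by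
  rw [List.getD_eq_getElem _ _ hm,
    List.getD_eq_getElem _ _ (lt_of_lt_of_le hm h.length_le), h.getElem hm]

lemma getD_append_self (u : List ℕ) (d : ℕ) (t : List ℕ) :
    (u ++ d :: t).getD u.length 0 = d := by
  rw [List.getD_eq_getElem _ _ (by simp)]
  rw [List.getElem_append_right (le_refl _)]
  simp


noncomputable def vtx (τ : Finset (List ℕ)) (i : ℕ) : List ℕ :=
  (sortedVertices τ).getD i []

lemma sv_length (τ : Finset (List ℕ)) : (sortedVertices τ).length = τ.card :=
  Finset.length_sort _

lemma vtx_mem (τ : Finset (List ℕ)) {i : ℕ} (hi : i < τ.card) : vtx τ i ∈ τ := by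
  rw [vtx, List.getD_eq_getElem _ _ (by rw [sv_length]; exact hi)]
  exact (Finset.mem_sort _).1 (List.getElem_mem _)

lemma vtx_lt_vtx (τ : Finset (List ℕ)) {i j : ℕ} (hij : i < j) (hj : j < τ.card) :
    vtx τ i < vtx τ j := by
  have hj' : j < (sortedVertices τ).length := by rw [sv_length]; exact hj
  have hi' : i < (sortedVertices τ).length := lt_trans hij hj'
  rw [vtx, vtx, List.getD_eq_getElem _ _ hi', List.getD_eq_getElem _ _ hj']
  have := (Finset.sortedLT_sort τ).getElem_lt_getElem_of_lt (hi := hi') (hj := hj') hij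
  exact this

lemma vtx_le_vtx (τ : Finset (List ℕ)) {i j : ℕ} (hij : i ≤ j) (hj : j < τ.card) :
    vtx τ i ≤ vtx τ j := by
  rcases eq_or_lt_of_le hij with rfl | h
  · exact le_rfl
  · exact le_of_lt (vtx_lt_vtx τ h hj)

lemma vtx_index (τ : Finset (List ℕ)) {v : List ℕ} (hv : v ∈ τ) :
    ∃ i, i < τ.card ∧ vtx τ i = v := by
  have : v ∈ sortedVertices τ := (Finset.mem_sort _).2 hv
  obtain ⟨n, hn, he⟩ := List.mem_iff_getElem.1 this
  exact ⟨n, by rw [← sv_length]; exact hn, by rw [vtx, List.getD_eq_getElem _ _ hn, he]⟩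

lemma vtx_zero (τ : Finset (List ℕ)) (hτ : IsPlaneTree τ) : vtx τ 0 = [] := by
  obtain ⟨j, hj, hje⟩ := vtx_index τ hτ.1
  rcases Nat.eq_zero_or_pos j with rfl | hj0
  · exact hje
  · exfalso
    have h1 : vtx τ 0 < vtx τ j := vtx_lt_vtx τ hj0 hj
    rw [hje] at h1
    exact List.not_lex_nil (r := (· < ·)) h1

/-- the successor vertex is the minimum of all strictly larger vertices -/
lemma vtx_succ_min (τ : Finset (List ℕ)) {i : ℕ} (hi : i + 1 < τ.card)
    {v : List ℕ} (hv : v ∈ τ) (hlt : vtx τ i < v) : vtx τ (i + 1) ≤ v := by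
  obtain ⟨j, hj, rfl⟩ := vtx_index τ hv
  have hij : i < j := by
    by_contra h
    push_neg at h
    exact absurd (vtx_le_vtx τ h (lt_trans (Nat.lt_succ_self i) hi)) (not_le.mpr hlt)
  exact vtx_le_vtx τ hij hj

/-! ### tree lemmas -/

lemma mem_of_prefix {τ : Finset (List ℕ)} (hτ : IsPlaneTree τ) :
    ∀ {u : List ℕ}, u ∈ τ → ∀ {v : List ℕ}, v <+: u → v ∈ τ := by
  intro u
  induction u using List.reverseRecOn with
  | nil =>
    intro hu v hv
    rw [List.prefix_nil.mp hv]; exact hu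
  | append_singleton u a ih =>
    intro hu v hv
    rcases eq_or_ne v (u ++ [a]) with rfl | hne
    · exact hu
    · have hvu : v <+: u := by
        have hlen : v.length ≤ u.length := by
          have h1 : v.length ≤ u.length + 1 := by simpa using hv.length_le
          rcases eq_or_lt_of_le h1 with he | hl
          · exact absurd (hv.eq_of_length (by simpa using he)) hne
          · exact Nat.lt_succ_iff.mp hl
        exact List.prefix_of_prefix_length_le hv (by simp) (by simpa using hlen)
      have hu' : u ∈ τ := by
        have := hτ.2.1 _ hu (by simp)
        simpa using this
      exact ih hu' hvu

lemma label_bounds {τ : Finset (List ℕ)} (hτ : IsPlaneTree τ) {u : List ℕ} (hu : u ∈ τ)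
    {m : ℕ} (hm : m < u.length) :
    1 ≤ u.getD m 0 ∧ u.getD m 0 ≤ numChildren τ (u.take m) := by
  have htake : u.take (m + 1) = u.take m ++ [u.getD m 0] := by
    rw [List.getD_eq_getElem _ _ hm, List.take_succ]
    congr 1
    rw [List.getElem?_eq_getElem hm]
    rfl
  have hmem : u.take (m + 1) ∈ τ := mem_of_prefix hτ hu (List.take_prefix _ _)
  rw [htake] at hmem
  have hmem' : u.take m ∈ τ := mem_of_prefix hτ hu (List.take_prefix _ _)
  exact (hτ.2.2 _ hmem' _).1 hmem


noncomputable def hgt (τ : Finset (List ℕ)) (u : List ℕ) : ℤ :=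
  ∑ m ∈ Finset.range u.length, ((numChildren τ (u.take m) : ℤ) - (u.getD m 0 : ℤ))

@[simp] lemma hgt_nil (τ : Finset (List ℕ)) : hgt τ [] = 0 := by simp [hgt]

lemma hgt_append (τ : Finset (List ℕ)) (u : List ℕ) (c : ℕ) :
    hgt τ (u ++ [c]) = hgt τ u + ((numChildren τ u : ℤ) - (c : ℤ)) := by
  rw [hgt, hgt]
  have hl : (u ++ [c]).length = u.length + 1 := by simp
  rw [hl, Finset.sum_range_succ]
  congr 1
  · apply Finset.sum_congr rfl
    intro m hm
    rw [Finset.mem_range] at hm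
    rw [prefix_take_eq (List.prefix_append u [c]) (le_of_lt hm),
      prefix_getD_eq (List.prefix_append u [c]) hm]
  · rw [List.take_append_of_le_length (le_refl _), List.take_length,
      getD_append_self u c []]

lemma hgt_mono {τ : Finset (List ℕ)} (hτ : IsPlaneTree τ) :
    ∀ {v : List ℕ}, v ∈ τ → ∀ {u : List ℕ}, u <+: v → hgt τ u ≤ hgt τ v := by
  intro v
  induction v using List.reverseRecOn with
  | nil =>
    intro _ u hu
    rw [List.prefix_nil.mp hu]
  | append_singleton v a ih =>
    intro hv u hu
    rcases eq_or_ne u (v ++ [a]) with rfl | hne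
    · exact le_rfl
    · have hvu : u <+: v := by
        have hlen : u.length ≤ v.length := by
          have h1 : u.length ≤ v.length + 1 := by simpa using hu.length_le
          rcases eq_or_lt_of_le h1 with he | hl
          · exact absurd (hu.eq_of_length (by simpa using he)) hne
          · exact Nat.lt_succ_iff.mp hl
        exact List.prefix_of_prefix_length_le hu (by simp) (by simpa using hlen)
      have hv' : v ∈ τ := mem_of_prefix hτ hv (by simp)
      have hle : (a : ℤ) ≤ (numChildren τ v : ℤ) := by
        have := (hτ.2.2 _ hv' a).1 (by exact hv)
        exact_mod_cast this.2
      calc hgt τ u ≤ hgt τ v := ih hv' hvu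
        _ ≤ hgt τ (v ++ [a]) := by rw [hgt_append]; omega

/-- if all the labels of `u` strictly after position `n = u₀.length` are maximal
(equal to the number of children of the corresponding prefix), then heights agree. -/
lemma hgt_eq_of_full {τ : Finset (List ℕ)} :
    ∀ {v u : List ℕ}, u <+: v →
      (∀ m, u.length ≤ m → (hm : m < v.length) → (v.getD m 0 : ℤ) = numChildren τ (v.take m)) →
      hgt τ u = hgt τ v := by
  intro v
  induction v using List.reverseRecOn with
  | nil =>
    intro u hu _
    rw [List.prefix_nil.mp hu]
  | append_singleton v a ih =>
    intro u hu hfull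
    rcases eq_or_ne u (v ++ [a]) with rfl | hne
    · rfl
    · have hvu : u <+: v := by
        have hlen : u.length ≤ v.length := by
          have h1 : u.length ≤ v.length + 1 := by simpa using hu.length_le
          rcases eq_or_lt_of_le h1 with he | hl
          · exact absurd (hu.eq_of_length (by simpa using he)) hne
          · exact Nat.lt_succ_iff.mp hl
        exact List.prefix_of_prefix_length_le hu (by simp) (by simpa using hlen)
      have hlast : (a : ℤ) = numChildren τ v := by
        have := hfull v.length hvu.length_le (by simp)
        rwa [getD_append_self, List.take_append_of_le_length (le_refl _),
          List.take_length] at this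
      have hfull' : ∀ m, u.length ≤ m → (hm : m < v.length) →
          (v.getD m 0 : ℤ) = numChildren τ (v.take m) := by
        intro m hm hmv
        have := hfull m hm (by simp; omega)
        rwa [prefix_getD_eq (List.prefix_append v [a]) hmv,
          prefix_take_eq (List.prefix_append v [a]) (le_of_lt hmv)] at this
      rw [ih hvu hfull', hgt_append, hlast]
      ring


lemma lukasPath_zero (τ : Finset (List ℕ)) : lukasPath τ 0 = 0 := by simp [lukasPath]

lemma lukasPath_succ (τ : Finset (List ℕ)) (i : ℕ) :
    lukasPath τ (i + 1) = lukasPath τ i + ((numChildren τ (vtx τ i) : ℤ) - 1) := by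
  rw [lukasPath, Finset.sum_range_succ]; rfl

/-! ### successor analysis -/

lemma vtx_succ_of_pos (τ : Finset (List ℕ)) (hτ : IsPlaneTree τ) {i : ℕ}
    (hi : i + 1 < τ.card) (hk : 1 ≤ numChildren τ (vtx τ i)) :
    vtx τ (i + 1) = vtx τ i ++ [1] := by
  set u := vtx τ i with hu
  have hui : i < τ.card := lt_trans (Nat.lt_succ_self i) hi
  have humem : u ∈ τ := vtx_mem τ hui
  have hchild : u ++ [1] ∈ τ := (hτ.2.2 _ humem 1).2 ⟨le_refl _, hk⟩
  have h1 : vtx τ (i + 1) ≤ u ++ [1] :=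
    vtx_succ_min τ hi hchild (lex_append_lt u (by simp))
  have h2 : u ++ [1] ≤ vtx τ (i + 1) := by
    set v := vtx τ (i + 1) with hv
    have hvmem : v ∈ τ := vtx_mem τ hi
    have hlt : u < v := vtx_lt_vtx τ (Nat.lt_succ_self i) hi
    rcases lex_lt_elim hlt with hp | ⟨w, b, c, s, r, hue, hve, hbc⟩
    · obtain ⟨t, hte⟩ := hp
      cases t with
      | nil => simp at hte; rw [hte] at hlt; exact absurd hlt (lt_irrefl _)
      | cons d t' =>
        have hud : u ++ [d] ∈ τ := by
          apply mem_of_prefix hτ hvmem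
          rw [← hte]
          exact ⟨t', by simp⟩
        have hd1 : 1 ≤ d := ((hτ.2.2 _ humem d).1 hud).1
        rcases eq_or_lt_of_le hd1 with rfl | hd
        · exact lex_prefix_le ⟨t', by rw [← hte]; simp⟩
        · have : u ++ 1 :: [] < u ++ d :: t' := lex_diverge_lt hd u [] t'
          rw [hte] at this
          exact le_of_lt this
    · rw [hue, hve]
      have : w ++ b :: (s ++ [1]) < w ++ c :: r := lex_diverge_lt hbc w (s ++ [1]) r
      have he : w ++ b :: (s ++ [1]) = (w ++ b :: s) ++ [1] := by simp
      rw [he] at this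
      exact le_of_lt this
  exact le_antisymm h1 h2

lemma hgt_succ_of_leaf (τ : Finset (List ℕ)) (hτ : IsPlaneTree τ) {i : ℕ}
    (hi : i + 1 < τ.card) (hk : numChildren τ (vtx τ i) = 0) :
    hgt τ (vtx τ (i + 1)) = hgt τ (vtx τ i) - 1 := by
  set u := vtx τ i with hu
  set v := vtx τ (i + 1) with hv
  have hui : i < τ.card := lt_trans (Nat.lt_succ_self i) hi
  have humem : u ∈ τ := vtx_mem τ hui
  have hvmem : v ∈ τ := vtx_mem τ hi
  have hlt : u < v := vtx_lt_vtx τ (Nat.lt_succ_self i) hi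
  rcases lex_lt_elim hlt with hp | ⟨w, b, c, s, r, hue, hve, hbc⟩
  · exfalso
    obtain ⟨t, hte⟩ := hp
    cases t with
    | nil => simp at hte; rw [hte] at hlt; exact absurd hlt (lt_irrefl _)
    | cons d t' =>
      have hud : u ++ [d] ∈ τ := by
        apply mem_of_prefix hτ hvmem
        rw [← hte]; exact ⟨t', by simp⟩
      have := (hτ.2.2 _ humem d).1 hud
      omega
  · -- divergence case
    have hwb_pre : w ++ [b] <+: u := by rw [hue]; exact ⟨s, by simp⟩
    have hwbmem : w ++ [b] ∈ τ := mem_of_prefix hτ humem hwb_pre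
    have hwmem : w ∈ τ := mem_of_prefix hτ humem (by rw [hue]; exact ⟨b :: s, rfl⟩)
    have hb := (hτ.2.2 _ hwmem b).1 hwbmem
    -- r = []
    have hr : r = [] := by
      by_contra hrne
      have hwc_pre : w ++ [c] <+: v := by rw [hve]; exact ⟨r, by simp⟩
      have hwcmem : w ++ [c] ∈ τ := mem_of_prefix hτ hvmem hwc_pre
      have hlt1 : u < w ++ [c] := by
        rw [hue]; exact lex_diverge_lt hbc w s []
      have hle : v ≤ w ++ [c] := vtx_succ_min τ hi hwcmem hlt1
      have hlt2 : w ++ [c] < v := by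
        have : w ++ [c] < (w ++ [c]) ++ r := lex_append_lt _ hrne
        rw [hve]; simpa using this
      exact absurd hle (not_le.mpr hlt2)
    have hvwc : v = w ++ [c] := by rw [hve, hr]
    have hwcmem : w ++ [c] ∈ τ := hvwc ▸ hvmem
    have hc := (hτ.2.2 _ hwmem c).1 hwcmem
    -- c = b + 1
    have hc1 : c = b + 1 := by
      by_contra hcne
      have hb1c : b + 1 < c := by omega
      have hwb1mem : w ++ [b + 1] ∈ τ := (hτ.2.2 _ hwmem (b + 1)).2 ⟨by omega, by omega⟩
      have hlt1 : u < w ++ [b + 1] := by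
        rw [hue]; exact lex_diverge_lt (Nat.lt_succ_self b) w s []
      have hle : v ≤ w ++ [b + 1] := vtx_succ_min τ hi hwb1mem hlt1
      have hlt2 : w ++ [b + 1] < v := by
        rw [hvwc]; exact lex_diverge_lt hb1c w [] []
      exact absurd hle (not_le.mpr hlt2)
    -- all labels of u after w ++ [b] are maximal
    have hfull : ∀ m, (w ++ [b]).length ≤ m → (hm : m < u.length) →
        (u.getD m 0 : ℤ) = numChildren τ (u.take m) := by
      intro m hm hmu
      have hbounds := label_bounds hτ humem hmu
      by_contra hne
      have hlab : u.getD m 0 < numChildren τ (u.take m) := by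
        rcases lt_or_eq_of_le hbounds.2 with h | h
        · exact h
        · exact absurd (by exact_mod_cast h) hne
      set a := u.take m with ha
      set l := u.getD m 0 with hl
      have hamem : a ∈ τ := mem_of_prefix hτ humem (List.take_prefix _ _)
      have hal : a ++ [l + 1] ∈ τ := (hτ.2.2 _ hamem (l + 1)).2 ⟨by omega, by omega⟩
      have hudecomp : u = a ++ l :: u.drop (m + 1) := by
        rw [ha, hl, List.getD_eq_getElem _ _ hmu]
        conv_lhs => rw [← List.take_append_drop m u]
        congr 1
        exact List.drop_eq_getElem_cons hmu
      have hlt1 : u < a ++ [l + 1] := by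
        conv_lhs => rw [hudecomp]
        exact lex_diverge_lt (Nat.lt_succ_self l) a _ []
      have hle : v ≤ a ++ [l + 1] := vtx_succ_min τ hi hal hlt1
      -- a ++ [l+1] < v since a starts with w ++ b
      have hwba : w ++ [b] <+: a := by
        apply List.prefix_of_prefix_length_le hwb_pre (List.take_prefix _ _)
        rw [List.length_take, min_eq_left (le_of_lt hmu)]
        exact hm
      obtain ⟨a', ha'⟩ := hwba
      have hlt2 : a ++ [l + 1] < v := by
        rw [hvwc, ← ha']
        have he : (w ++ [b]) ++ a' ++ [l + 1] = w ++ b :: (a' ++ [l + 1]) := by simp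
        rw [he]
        exact lex_diverge_lt hbc w _ []
      exact absurd hle (not_le.mpr hlt2)
    have h1 : hgt τ (w ++ [b]) = hgt τ u := hgt_eq_of_full hwb_pre hfull
    rw [hvwc, hgt_append, ← h1, hgt_append, hc1]
    push_cast
    ring

/-! ### the path equals the height function -/

lemma lukas_eq_hgt (τ : Finset (List ℕ)) (hτ : IsPlaneTree τ) :
    ∀ i, i < τ.card → lukasPath τ i = hgt τ (vtx τ i) := by
  intro i
  induction i with
  | zero => intro _; rw [lukasPath_zero, vtx_zero τ hτ, hgt_nil]
  | succ i ih =>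
    intro hi
    have hui : i < τ.card := lt_trans (Nat.lt_succ_self i) hi
    rw [lukasPath_succ, ih hui]
    rcases Nat.eq_zero_or_pos (numChildren τ (vtx τ i)) with hk | hk
    · rw [hgt_succ_of_leaf τ hτ hi hk, hk]
      push_cast
      ring
    · rw [vtx_succ_of_pos τ hτ hi hk, hgt_append]
      push_cast
      ring

lemma record_iff (τ : Finset (List ℕ)) (hτ : IsPlaneTree τ) {i j : ℕ}
    (hj : j < i) (hi : i < τ.card) :
    (∀ l, j ≤ l → l ≤ i → lukasPath τ j ≤ lukasPath τ l) ↔ vtx τ j <+: vtx τ i := by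
  constructor
  · intro hrec
    by_contra hnp
    set F := (Finset.Icc j i).filter (fun l => vtx τ j <+: vtx τ l) with hF
    have hjF : j ∈ F := by
      rw [hF, Finset.mem_filter, Finset.mem_Icc]
      exact ⟨⟨le_refl j, le_of_lt hj⟩, List.prefix_rfl⟩
    have hFne : F.Nonempty := ⟨j, hjF⟩
    set L := F.max' hFne with hL
    have hLF : L ∈ F := F.max'_mem hFne
    rw [hF, Finset.mem_filter, Finset.mem_Icc] at hLF
    obtain ⟨⟨hjL, hLi⟩, hpre⟩ := hLF
    have hLi' : L < i := by
      rcases eq_or_lt_of_le hLi with h | h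
      · rw [h] at hpre; exact absurd hpre hnp
      · exact h
    have hL1i : L + 1 ≤ i := hLi'
    have hL1card : L + 1 < τ.card := lt_of_le_of_lt hL1i hi
    have hnotpre : ¬ vtx τ j <+: vtx τ (L + 1) := by
      intro hc
      have : L + 1 ∈ F := by
        rw [hF, Finset.mem_filter, Finset.mem_Icc]
        exact ⟨⟨le_trans hjL (Nat.le_succ L), hL1i⟩, hc⟩
      have := Finset.le_max' F _ this
      omega
    have hjlt : vtx τ j < vtx τ (L + 1) := vtx_lt_vtx τ (by omega) hL1card
    rcases lex_lt_elim hjlt with hp | ⟨w, b, c, s, r, hue, hve, hbc⟩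
    · exact hnotpre hp
    · have hjmem : vtx τ j ∈ τ := vtx_mem τ (by omega)
      have hsuccmem : vtx τ (L + 1) ∈ τ := vtx_mem τ hL1card
      have hwb_pre : w ++ [b] <+: vtx τ j := by rw [hue]; exact ⟨s, by simp⟩
      have hwbmem : w ++ [b] ∈ τ := mem_of_prefix hτ hjmem hwb_pre
      have hwmem : w ∈ τ := mem_of_prefix hτ hjmem (by rw [hue]; exact ⟨b :: s, rfl⟩)
      have hb := (hτ.2.2 _ hwmem b).1 hwbmem
      have hr : r = [] := by
        by_contra hrne
        have hwc_pre : w ++ [c] <+: vtx τ (L + 1) := by rw [hve]; exact ⟨r, by simp⟩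
        have hwcmem : w ++ [c] ∈ τ := mem_of_prefix hτ hsuccmem hwc_pre
        have hjwc : vtx τ j < w ++ [c] := by
          rw [hue]; exact lex_diverge_lt hbc w s []
        rcases le_or_gt (w ++ [c]) (vtx τ L) with hle | hlt
        · have hsand : vtx τ j <+: w ++ [c] := by
            apply lex_sandwich (le_of_lt hjwc) ?_ hpre
            exact hle
          -- contradiction: vtx τ j = w ++ b :: s can't be a prefix of w ++ [c]
          have hlen : w.length < (vtx τ j).length := by rw [hue]; simp
          have h1 := prefix_getD_eq hsand hlen
          rw [hue, getD_append_self w b s, getD_append_self w c []] at h1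
          omega
        · have hle2 : vtx τ (L + 1) ≤ w ++ [c] := vtx_succ_min τ hL1card hwcmem hlt
          have hlt2 : w ++ [c] < vtx τ (L + 1) := by
            have : w ++ [c] < (w ++ [c]) ++ r := lex_append_lt _ hrne
            rw [hve]; simpa using this
          exact absurd hle2 (not_le.mpr hlt2)
      have hvwc : vtx τ (L + 1) = w ++ [c] := by rw [hve, hr]
      have hwcmem : w ++ [c] ∈ τ := hvwc ▸ hsuccmem
      have hc := (hτ.2.2 _ hwmem c).1 hwcmem
      have hstep : hgt τ (vtx τ (L + 1)) ≤ hgt τ (vtx τ j) - 1 := by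
        have h1 : hgt τ (w ++ [b]) ≤ hgt τ (vtx τ j) := hgt_mono hτ hjmem hwb_pre
        rw [hvwc, hgt_append]
        rw [hgt_append] at h1
        have : (c : ℤ) ≥ (b : ℤ) + 1 := by exact_mod_cast hbc
        omega
      have hrec1 := hrec (L + 1) (by omega) hL1i
      rw [lukas_eq_hgt τ hτ j (by omega), lukas_eq_hgt τ hτ (L + 1) hL1card] at hrec1
      omega
  · intro hpre l hjl hli
    have hlcard : l < τ.card := lt_of_le_of_lt hli hi
    have h1 : vtx τ j ≤ vtx τ l := vtx_le_vtx τ hjl hlcard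
    have h2 : vtx τ l ≤ vtx τ i := vtx_le_vtx τ hli hi
    have hsand : vtx τ j <+: vtx τ l := lex_sandwich h1 h2 hpre
    rw [lukas_eq_hgt τ hτ j (by omega), lukas_eq_hgt τ hτ l hlcard]
    exact hgt_mono hτ (vtx_mem τ hlcard) hsand

lemma count_prefixes (τ : Finset (List ℕ)) (hτ : IsPlaneTree τ) {i : ℕ} (hi : i < τ.card) :
    ((Finset.range i).filter (fun j => vtx τ j <+: vtx τ i)).card = (vtx τ i).length := by
  rw [← Finset.card_range (vtx τ i).length]
  apply Finset.card_bij (fun j _ => (vtx τ j).length)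
  · intro j hjf
    rw [Finset.mem_filter, Finset.mem_range] at hjf
    obtain ⟨hj, hpre⟩ := hjf
    rw [Finset.mem_range]
    rcases lt_or_eq_of_le hpre.length_le with h | h
    · exact h
    · exact absurd (hpre.eq_of_length h) (ne_of_lt (vtx_lt_vtx τ hj hi))
  · intro j₁ hj₁ j₂ hj₂ hlen
    rw [Finset.mem_filter, Finset.mem_range] at hj₁ hj₂
    have he : vtx τ j₁ = vtx τ j₂ :=
      (List.prefix_of_prefix_length_le hj₁.2 hj₂.2 (le_of_eq hlen)).eq_of_length hlen
    by_contra hne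
    rcases lt_or_gt_of_ne hne with h | h
    · exact absurd he (ne_of_lt (vtx_lt_vtx τ h (lt_trans hj₂.1 hi)))
    · exact absurd he.symm (ne_of_lt (vtx_lt_vtx τ h (lt_trans hj₁.1 hi)))
  · intro m hm
    rw [Finset.mem_range] at hm
    have hvmem : (vtx τ i).take m ∈ τ :=
      mem_of_prefix hτ (vtx_mem τ hi) (List.take_prefix _ _)
    obtain ⟨j, hjcard, hjv⟩ := vtx_index τ hvmem
    have hlen : (vtx τ j).length = m := by
      rw [hjv, List.length_take, min_eq_left (le_of_lt hm)]
    have hne : vtx τ j ≠ vtx τ i := by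
      intro hc
      rw [hc] at hlen
      omega
    have hprefix : vtx τ j <+: vtx τ i := by rw [hjv]; exact List.take_prefix _ _
    have hji : j < i := by
      by_contra hc
      push_neg at hc
      have h1 : vtx τ i ≤ vtx τ j := vtx_le_vtx τ hc hjcard
      have h2 : vtx τ j < vtx τ i := lt_of_le_of_ne (lex_prefix_le hprefix) hne
      exact absurd h1 (not_le.mpr h2)
    exact ⟨j, by rw [Finset.mem_filter, Finset.mem_range]; exact ⟨hji, hprefix⟩, hlen⟩

theorem planeTree_height_formula (τ : Finset (List ℕ)) (hτ : IsPlaneTree τ) :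
    ∀ i : ℕ, i < τ.card →
      ((sortedVertices τ).getD i []).length =
        ((Finset.range i).filter
          (fun j => ∀ l : ℕ, j ≤ l → l ≤ i → lukasPath τ j ≤ lukasPath τ l)).card := by
  intro i hi
  have hfilter : ((Finset.range i).filter
        (fun j => ∀ l : ℕ, j ≤ l → l ≤ i → lukasPath τ j ≤ lukasPath τ l))
      = ((Finset.range i).filter (fun j => vtx τ j <+: vtx τ i)) := by
    apply Finset.filter_congr
    intro j hj
    rw [Finset.mem_range] at hj
    exact record_iff τ hτ hj hi
  show (vtx τ i).length = _
  rw [hfilter, count_prefixes τ hτ hi]
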